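/- Let q = 2^r. Consider the F_2-linear map Φ from F_q to the space of functions DC⁻(n,q) → F_2 (respectively DC⁺(n,q) → F_2) sending a ∈ F_q to the function w ↦ tr(a·Tr w). Then: (a) Φ is injective (hence an isomorphism onto the dual code C(DC⁻(n,q))^⊥, which therefore has exactly q codewords) whenever n ≥ 3 is odd and q is arbitrary, or n = 1 and q ≥ 8; (b) the analogous map for DC⁺(n,q) is injective (hence an isomorphism onto C(DC⁺(n,q))^⊥) whenever n ≥ 4 is even and q is arbitrary, or n = 2 and q ≥ 4. -/

import Mathlib

open scoped Classical
open Finset Matrix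

noncomputable section

/-- The trace map `tr : F_q → F_2`, viewed inside `F`:
`tr(x) = x + x² + ⋯ + x^(2^(r−1))`. -/
def trF (F : Type*) [Field F] (r : ℕ) (x : F) : F :=
  ∑ i ∈ Finset.range r, x ^ (2 ^ i)

/-- The canonical additive character `λ(x) = (−1)^(tr x)`, valued in `ℚ`. -/
def lam (F : Type*) [Field F] (r : ℕ) (x : F) : ℚ :=
  if trF F r x = 0 then 1 else -1

/-- The Kloosterman sum `K(λ;a)`. -/
def Kl (F : Type*) [Field F] [Fintype F] (r : ℕ) (a : F) : ℚ :=
  ∑ α : Fˣ, lam F r ((α : F) + a * ((α : F))⁻¹)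

/-- The 2-dimensional Kloosterman sum `K₂(λ;a)`. -/
def Kl2 (F : Type*) [Field F] [Fintype F] (r : ℕ) (a : F) : ℚ :=
  ∑ α : Fˣ, ∑ β : Fˣ, lam F r ((α : F) + (β : F) + a * ((α : F))⁻¹ * ((β : F))⁻¹)

/-- The m-dimensional Kloosterman sum `K_m(λ;a)`; `K₀(λ;a) = λ(a)`. -/
def Klm (F : Type*) [Field F] [Fintype F] (r m : ℕ) (a : F) : ℚ :=
  ∑ α : Fin m → Fˣ, lam F r ((∑ i, ((α i : F))) + a * ∏ i, ((α i : F))⁻¹)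

/-- Power moments of Kloosterman sums, `MK^h`. -/
def MK (F : Type*) [Field F] [Fintype F] (r h : ℕ) : ℚ :=
  ∑ a : Fˣ, (Kl F r (a : F)) ^ h

/-- Power moments of 2-dimensional Kloosterman sums, `MK₂^h`. -/
def MK2 (F : Type*) [Field F] [Fintype F] (r h : ℕ) : ℚ :=
  ∑ a : Fˣ, (Kl2 F r (a : F)) ^ h

/-- Stirling numbers of the second kind. -/
def stirl (h t : ℕ) : ℚ :=
  (1 / (t.factorial : ℚ)) *
    ∑ j ∈ Finset.range (t + 1), (-1 : ℚ) ^ (t - j) * (t.choose j : ℚ) * (j : ℚ) ^ h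

/-- Binomial coefficient `binom(b,a)` with the convention that it is `0`
when `a < 0` or `a > b`. -/
def binomQ (b a : ℤ) : ℚ :=
  if 0 ≤ a ∧ a ≤ b then (b.toNat.choose a.toNat : ℚ) else 0

/-- The q-binomial coefficient `[n,r]_q`. -/
def qbinom (q n r : ℕ) : ℚ :=
  ∏ j ∈ Finset.range r, ((q : ℚ) ^ (n - j) - 1) / ((q : ℚ) ^ (r - j) - 1)

/-- `A⁻(n,q)`. -/
def Aneg (q n : ℕ) : ℚ :=
  (q : ℚ) ^ ((5 * n ^ 2 - 1) / 4) * qbinom q n 1 *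
    ∏ j ∈ Finset.range ((n - 1) / 2), ((q : ℚ) ^ (2 * (j + 1) - 1) - 1)

/-- `B⁻(n,q)`. -/
def Bneg (q n : ℕ) : ℚ :=
  (q : ℚ) ^ ((n - 1) ^ 2 / 4) * ((q : ℚ) ^ n - 1) *
    ∏ j ∈ Finset.range ((n - 1) / 2), ((q : ℚ) ^ (2 * (j + 1)) - 1)

/-- `A⁺(n,q)`. -/
def Apos (q n : ℕ) : ℚ :=
  (q : ℚ) ^ ((5 * n ^ 2 - 2 * n) / 4) * qbinom q n 2 *
    ∏ j ∈ Finset.range ((n - 2) / 2), ((q : ℚ) ^ (2 * (j + 1) - 1) - 1)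

/-- `B⁺(n,q)`. -/
def Bpos (q n : ℕ) : ℚ :=
  (q : ℚ) ^ ((n - 2) ^ 2 / 4) * ((q : ℚ) ^ n - 1) * ((q : ℚ) ^ (n - 1) - 1) *
    ∏ j ∈ Finset.range ((n - 2) / 2), ((q : ℚ) ^ (2 * (j + 1)) - 1)

/-- The type of `2n × 2n` matrices over `F`. -/
abbrev Mat (F : Type*) (n : ℕ) := Matrix (Fin n ⊕ Fin n) (Fin n ⊕ Fin n) F

/-- The maximal parabolic subgroup `P(2n,q)` of `Sp(2n,q)`, as a set of matrices. -/
def Pmat (F : Type*) [Field F] (n : ℕ) : Set (Mat F n) :=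
  {w | ∃ A B : Matrix (Fin n) (Fin n) F, IsUnit A ∧ Bᵀ = B ∧
        w = Matrix.fromBlocks A 0 0 (A⁻¹)ᵀ * Matrix.fromBlocks 1 B 0 1}

/-- The element `σ_r ∈ Sp(2n,q)`. -/
def sigmaMat (F : Type*) [Field F] (n r : ℕ) : Mat F n :=
  Matrix.fromBlocks
    (Matrix.of fun i j : Fin n => if i = j ∧ r ≤ (i : ℕ) then 1 else 0)
    (Matrix.of fun i j : Fin n => if i = j ∧ (i : ℕ) < r then 1 else 0)
    (Matrix.of fun i j : Fin n => if i = j ∧ (i : ℕ) < r then 1 else 0)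
    (Matrix.of fun i j : Fin n => if i = j ∧ r ≤ (i : ℕ) then 1 else 0)

/-- The double coset `P σ_r P` in `Sp(2n,q)`. -/
def DCoset (F : Type*) [Field F] (n r : ℕ) : Set (Mat F n) :=
  {w | ∃ p ∈ Pmat F n, ∃ p' ∈ Pmat F n, w = p * sigmaMat F n r * p'}

/-- `DC⁻(n,q) = P σ_(n−1) P`. -/
def DCneg (F : Type*) [Field F] (n : ℕ) : Set (Mat F n) := DCoset F n (n - 1)

/-- `DC⁺(n,q) = P σ_(n−2) P`. -/
def DCpos (F : Type*) [Field F] (n : ℕ) : Set (Mat F n) := DCoset F n (n - 2)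

/-- `N_S(β) = |{w ∈ S : Tr w = β}|`. -/
def NDC (F : Type*) [Field F] [Fintype F] (n : ℕ) (S : Set (Mat F n)) (β : F) : ℕ :=
  (Finset.univ.filter fun w => w ∈ S ∧ Matrix.trace w = β).card

/-- Hamming weight of a binary word. -/
def wordWeight {α : Type*} [Fintype α] (u : α → ZMod 2) : ℕ :=
  (Finset.univ.filter fun x => u x = 1).card

/-- The number of codewords of Hamming weight `j` in the binary code `C(S)`
consisting of all `u ∈ F_2^S` with `∑_{w ∈ S} u(w)·Tr(w) = 0` in `F`. -/
def weightCount (F : Type*) [Field F] [Fintype F] (n : ℕ) (S : Set (Mat F n)) (j : ℕ) : ℕ :=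
  Nat.card {u : S → ZMod 2 //
    (∑ w : S, if u w = 1 then Matrix.trace (w : Mat F n) else 0) = 0 ∧ wordWeight u = j}

/-- The Kloosterman sum `K(ψ;a)` for a general (complex-valued) additive character. -/
def KlC (F : Type*) [Field F] [Fintype F] (ψ : AddChar F ℂ) (a : F) : ℂ :=
  ∑ α : Fˣ, ψ ((α : F) + a * ((α : F))⁻¹)

/-- The Kloosterman sum `K_{GL(t,q)}(ψ;a)` for the general linear group. -/
def KGL (F : Type*) [Field F] [Fintype F] (ψ : AddChar F ℂ) (t : ℕ) (a : F) : ℂ :=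
  ∑ w : Matrix.GeneralLinearGroup (Fin t) F,
    ψ (Matrix.trace (w : Matrix (Fin t) (Fin t) F) +
       a * Matrix.trace ((↑(w⁻¹) : Matrix (Fin t) (Fin t) F)))

/-- The exponential sum `∑_{w ∈ S} ψ(Tr w)` over a set of matrices. -/
def expSum (F : Type*) [Field F] [Fintype F] (n : ℕ) (S : Set (Mat F n))
    (ψ : AddChar F ℂ) : ℂ :=
  ∑ w ∈ Finset.univ.filter (fun w => w ∈ S), ψ (Matrix.trace w)

/-- The exponential sum `∑_{w ∈ S} λ(a·Tr w)` over a set of matrices. -/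
def expSumQ (F : Type*) [Field F] [Fintype F] (r n : ℕ) (S : Set (Mat F n)) (a : F) : ℚ :=
  ∑ w ∈ Finset.univ.filter (fun w => w ∈ S), lam F r (a * Matrix.trace w)

/-- `tr` as a map to `ZMod 2`. -/
def trZ (F : Type*) [Field F] (r : ℕ) (x : F) : ZMod 2 :=
  if trF F r x = 0 then 0 else 1

namespace DualAux

variable {F : Type*} [Field F]

lemma two_zero [Fintype F] {r q : ℕ} (hr : 0 < r) (hq : q = 2 ^ r)
    (hF : Fintype.card F = q) : (2 : F) = 0 := by
  have h := FiniteField.cast_card_eq_zero F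
  rw [hF, hq] at h
  push_cast at h
  exact (pow_eq_zero_iff hr.ne').mp h

lemma add_sq' (h2 : (2 : F) = 0) (x y : F) : (x + y) ^ 2 = x ^ 2 + y ^ 2 := by
  rw [add_sq, h2]; ring

lemma add_pow_twopow (h2 : (2 : F) = 0) (i : ℕ) (x y : F) :
    (x + y) ^ (2 ^ i) = x ^ (2 ^ i) + y ^ (2 ^ i) := by
  induction i with
  | zero => simp
  | succ i ih => rw [pow_succ, pow_mul, pow_mul, pow_mul, ih, add_sq' h2]

lemma sum_sq (h2 : (2 : F) = 0) {ι : Type*} (s : Finset ι) (f : ι → F) :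
    (∑ i ∈ s, f i) ^ 2 = ∑ i ∈ s, f i ^ 2 := by
  induction s using Finset.cons_induction with
  | empty => simp
  | cons a s ha ih => rw [Finset.sum_cons, Finset.sum_cons, add_sq' h2, ih]

lemma trF_add (h2 : (2 : F) = 0) (r : ℕ) (x y : F) :
    trF F r (x + y) = trF F r x + trF F r y := by
  unfold trF
  rw [← Finset.sum_add_distrib]
  exact Finset.sum_congr rfl fun i _ => add_pow_twopow h2 i x y

lemma trF_zero (r : ℕ) : trF F r (0 : F) = 0 := by
  unfold trF
  exact Finset.sum_eq_zero fun i _ => zero_pow (by positivity)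

lemma trF_sq [Fintype F] {r q : ℕ} (hq : q = 2 ^ r) (hF : Fintype.card F = q) (x : F) :
    trF F r (x ^ 2) = trF F r x := by
  have hx : x ^ (2 ^ r) = x := by rw [← hq, ← hF]; exact FiniteField.pow_card x
  have h1 : ∀ i : ℕ, (x ^ 2) ^ (2 ^ i) = x ^ (2 ^ (i + 1)) := fun i => by
    rw [← pow_mul, ← pow_succ']
  have e1 : ∑ i ∈ range (r + 1), x ^ (2 ^ i)
      = (∑ i ∈ range r, x ^ (2 ^ (i + 1))) + x ^ (2 ^ 0) := Finset.sum_range_succ' _ r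
  have e2 : ∑ i ∈ range (r + 1), x ^ (2 ^ i)
      = (∑ i ∈ range r, x ^ (2 ^ i)) + x ^ (2 ^ r) := Finset.sum_range_succ _ r
  unfold trF
  calc ∑ i ∈ range r, (x ^ 2) ^ (2 ^ i) = ∑ i ∈ range r, x ^ (2 ^ (i + 1)) :=
        Finset.sum_congr rfl fun i _ => h1 i
    _ = ∑ i ∈ range r, x ^ (2 ^ i) := by
        have := e1.symm.trans e2
        rw [hx] at this
        simpa using this

lemma trF_zero_or_one [Fintype F] {r q : ℕ} (h2 : (2 : F) = 0) (hq : q = 2 ^ r)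
    (hF : Fintype.card F = q) (x : F) : trF F r x = 0 ∨ trF F r x = 1 := by
  have hidem : trF F r x ^ 2 = trF F r x := by
    have : trF F r x ^ 2 = trF F r (x ^ 2) := by
      unfold trF
      rw [sum_sq h2]
      exact Finset.sum_congr rfl fun i _ => by rw [← pow_mul, ← pow_mul, mul_comm]
    rw [this, trF_sq hq hF]
  have : trF F r x * (trF F r x - 1) = 0 := by linear_combination hidem
  rcases mul_eq_zero.mp this with h | h
  · exact Or.inl h
  · exact Or.inr (sub_eq_zero.mp h)

lemma exists_trF_one [Fintype F] {r q : ℕ} (hr : 0 < r) (hq : q = 2 ^ r)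
    (hF : Fintype.card F = q) : ∃ x : F, trF F r x = 1 := by
  have h2 := two_zero hr hq hF
  by_contra h
  push_neg at h
  have h0 : ∀ x : F, trF F r x = 0 := fun x =>
    (trF_zero_or_one h2 hq hF x).resolve_right (h x)
  set p : Polynomial F := ∑ i ∈ Finset.range r, Polynomial.X ^ (2 ^ i) with hp
  have heval : ∀ x : F, p.eval x = 0 := by
    intro x
    have := h0 x
    unfold trF at this
    simpa [hp, Polynomial.eval_finset_sum] using this
  have hdeg : p.natDegree < Fintype.card F := by
    calc p.natDegree ≤ 2 ^ (r - 1) := Polynomial.natDegree_sum_le_of_forall_le _ _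
          (fun i hi => by
            rw [Polynomial.natDegree_X_pow]
            exact Nat.pow_le_pow_right (by norm_num) (by
              have := Finset.mem_range.mp hi; omega))
      _ < 2 ^ r := Nat.pow_lt_pow_right one_lt_two (by omega)
      _ = Fintype.card F := by rw [hF, hq]
  have hp0 : p = 0 :=
    Polynomial.eq_zero_of_natDegree_lt_card_of_eval_eq_zero p Function.injective_id
      (fun i => heval i) hdeg
  have hc : p.coeff 1 = 1 := by
    rw [hp, Polynomial.finset_sum_coeff]
    rw [Finset.sum_eq_single_of_mem 0 (Finset.mem_range.mpr hr)]
    · simp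
    · intro i hi hne
      rw [Polynomial.coeff_X_pow, if_neg]
      have : 1 < 2 ^ i := Nat.one_lt_two_pow hne
      omega
  rw [hp0] at hc
  simp at hc

lemma trace_fromBlocks {n : ℕ} (A B C D : Matrix (Fin n) (Fin n) F) :
    Matrix.trace (Matrix.fromBlocks A B C D) = Matrix.trace A + Matrix.trace D := by
  simp [Matrix.trace, Fintype.sum_sum_type, Matrix.fromBlocks, Matrix.diag]

lemma one_mem_Pmat (n : ℕ) : (1 : Mat F n) ∈ Pmat F n := by
  refine ⟨1, 0, isUnit_one, by simp, ?_⟩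
  simp [Matrix.fromBlocks_one]

lemma sigmaMat_zero (n : ℕ) : sigmaMat F n 0 = 1 := by
  have : (1 : Mat F n) = Matrix.fromBlocks 1 0 0 1 := (Matrix.fromBlocks_one).symm
  rw [this]; unfold sigmaMat
  ext (i | i) (j | j) <;> simp [Matrix.fromBlocks, Matrix.one_apply]

lemma mem_DCoset_P {n : ℕ} (A : Matrix (Fin n) (Fin n) F) (hA : IsUnit A) :
    Matrix.fromBlocks A 0 0 (A⁻¹)ᵀ ∈ DCoset F n 0 := by
  refine ⟨_, ⟨A, 0, hA, by simp, rfl⟩, 1, one_mem_Pmat n, ?_⟩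
  rw [sigmaMat_zero]
  simp [Matrix.fromBlocks_one]

lemma trace_surj (h2 : (2 : F) = 0) {n k : ℕ} (hn : 0 < n) (hk : 0 < k) (β : F) :
    ∃ w ∈ DCoset F n k, Matrix.trace w = β := by
  set i0 : Fin n := ⟨0, hn⟩ with hi0
  have hBsymm : (Matrix.single i0 i0 β)ᵀ = Matrix.single i0 i0 β := by
    ext a b
    rw [Matrix.transpose_apply]
    by_cases hab : a = i0 ∧ b = i0
    · obtain ⟨rfl, rfl⟩ := hab; rfl
    · rw [Matrix.single_apply_of_ne (h := show ¬(i0 = b ∧ i0 = a) from fun h => hab ⟨h.2.symm, h.1.symm⟩),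
        Matrix.single_apply_of_ne (h := show ¬(i0 = a ∧ i0 = b) from fun h => hab ⟨h.1.symm, h.2.symm⟩)]
  set B := Matrix.single i0 i0 β with hB
  set p : Mat F n := Matrix.fromBlocks 1 B 0 1 with hp
  have hpmem : p ∈ Pmat F n := by
    refine ⟨1, B, isUnit_one, hBsymm, ?_⟩
    simp [hp, Matrix.fromBlocks_multiply]
  refine ⟨p * sigmaMat F n k * 1, ⟨p, hpmem, 1, one_mem_Pmat n, rfl⟩, ?_⟩
  rw [mul_one]
  unfold sigmaMat
  set D : Matrix (Fin n) (Fin n) F :=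
    Matrix.of fun i j : Fin n => if i = j ∧ k ≤ (i : ℕ) then 1 else 0 with hD
  set E : Matrix (Fin n) (Fin n) F :=
    Matrix.of fun i j : Fin n => if i = j ∧ (i : ℕ) < k then 1 else 0 with hE
  rw [hp, Matrix.fromBlocks_multiply, trace_fromBlocks]
  have hBE : Matrix.trace (B * E) = β := by
    rw [Matrix.trace]
    rw [Finset.sum_eq_single_of_mem i0 (Finset.mem_univ _)]
    · rw [Matrix.diag_apply, hB, Matrix.single_mul_apply_same]
      simp [hE, hi0, hk]
    · intro b _ hb
      rw [Matrix.diag_apply, hB, Matrix.single_mul_apply_of_ne (h := hb)]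
  have e1 : Matrix.trace (1 * D + B * E) = Matrix.trace D + β := by
    rw [Matrix.one_mul, Matrix.trace_add, hBE]
  rw [e1]
  have e2 : Matrix.trace ((0 : Matrix (Fin n) (Fin n) F) * E + 1 * D) = Matrix.trace D := by
    rw [Matrix.zero_mul, Matrix.one_mul, zero_add]
  rw [e2]
  have h : Matrix.trace D + Matrix.trace D = 0 := by
    rw [← two_mul, h2, zero_mul]
  linear_combination h

lemma exists_w_one (a : F) (ha : a ≠ 0) :
    ∃ w ∈ DCoset F 1 0, Matrix.trace w = a + a⁻¹ := by
  set A : Matrix (Fin 1) (Fin 1) F := !![a] with hA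
  have hunit : IsUnit A := by
    rw [Matrix.isUnit_iff_isUnit_det, hA, Matrix.det_fin_one_of]
    exact ha.isUnit
  refine ⟨_, mem_DCoset_P A hunit, ?_⟩
  rw [trace_fromBlocks, Matrix.trace_transpose]
  have htrAinv : Matrix.trace A⁻¹ = a⁻¹ := by
    rw [Matrix.inv_def, Matrix.trace_smul, hA, Matrix.adjugate_fin_one,
      Matrix.det_fin_one_of, Ring.inverse_eq_inv', Matrix.trace_one]
    simp
  rw [htrAinv, hA, Matrix.trace_fin_one_of]

lemma exists_notMem [Fintype F] (s : Finset F) (h : s.card < Fintype.card F) :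
    ∃ x : F, x ∉ s := by
  by_contra h'
  push_neg at h'
  have hsub : (Finset.univ : Finset F) ⊆ s := fun x _ => h' x
  have := Finset.card_le_card hsub
  rw [Finset.card_univ] at this
  omega

lemma exists_w_two [Fintype F] (h2 : (2 : F) = 0) (hcard : 3 ≤ Fintype.card F) (β : F) :
    ∃ w ∈ DCoset F 2 0, Matrix.trace w = β := by
  obtain ⟨d, hd⟩ : ∃ d : F, d ∉ ({0, 1} : Finset F) := by
    apply exists_notMem
    have h1 : ({0, 1} : Finset F).card ≤ 2 := by
      apply le_trans (Finset.card_insert_le _ _); simp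
    omega
  simp only [Finset.mem_insert, Finset.mem_singleton, not_or] at hd
  obtain ⟨hd0, hd1⟩ := hd
  have hfac : (1 : F) + d⁻¹ ≠ 0 := by
    intro h
    apply hd1
    have h' : d * (1 + d⁻¹) = d * 0 := by rw [h]
    rw [mul_zero, mul_add, mul_inv_cancel₀ hd0, mul_one] at h'
    linear_combination h' - h2
  set t : F := β * ((1 : F) + d⁻¹)⁻¹ with ht
  set A : Matrix (Fin 2) (Fin 2) F := !![0, d; 1, t] with hA
  have hdet : A.det = -d := by rw [hA, Matrix.det_fin_two_of]; ring
  have hunit : IsUnit A := by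
    rw [Matrix.isUnit_iff_isUnit_det, hdet]
    exact (neg_ne_zero.mpr hd0).isUnit
  refine ⟨_, mem_DCoset_P A hunit, ?_⟩
  rw [trace_fromBlocks, Matrix.trace_transpose]
  have htrA : Matrix.trace A = t := by rw [hA, Matrix.trace_fin_two_of, zero_add]
  have htrAinv : Matrix.trace A⁻¹ = (-d)⁻¹ * t := by
    rw [Matrix.inv_def, Matrix.trace_smul, hdet, hA, Matrix.adjugate_fin_two_of,
      Matrix.trace_fin_two_of, Ring.inverse_eq_inv']
    simp [smul_eq_mul]
  rw [htrA, htrAinv]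
  have hnegd : (-d)⁻¹ = d⁻¹ := by
    have : -d = d := by linear_combination -d * h2
    rw [this]
  rw [hnegd]
  have hkey : t * (1 + d⁻¹) = β := by rw [ht, mul_assoc, inv_mul_cancel₀ hfac, mul_one]
  linear_combination hkey

lemma key_one [Fintype F] {r q : ℕ} (hr : 0 < r) (hq : q = 2 ^ r)
    (hF : Fintype.card F = q) (hq8 : 8 ≤ q) (c : F) (hc : c ≠ 0) :
    ∃ a : F, a ≠ 0 ∧ trF F r (c * (a + a⁻¹)) = 1 := by
  have h2 := two_zero hr hq hF
  by_contra h
  push_neg at h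
  have hg : ∀ a : F, a ≠ 0 → trF F r (c * (a + a⁻¹)) = 0 := fun a ha =>
    (trF_zero_or_one h2 hq hF _).resolve_right (h a ha)
  have step1 : ∀ x y : F, x ≠ 0 → y ≠ 0 → x ≠ y →
      trF F r (c * x⁻¹ + c * y⁻¹ + c * (x + y)⁻¹) = 0 := by
    intro x y hx hy hxy
    have hxy0 : x + y ≠ 0 := by
      intro h0
      apply hxy
      linear_combination h0 - y * h2
    have e1 := hg x hx
    have e2 := hg y hy
    have e3 := hg (x + y) hxy0
    have key : trF F r (c * x⁻¹ + c * y⁻¹ + c * (x + y)⁻¹)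
        = trF F r (c * (x + x⁻¹) + (c * (y + y⁻¹) + c * ((x + y) + (x + y)⁻¹))) := by
      congr 1
      linear_combination (-(c * x) - c * y) * h2
    rw [key, trF_add h2, trF_add h2, e1, e2, e3]
    ring
  obtain ⟨x1, hx1⟩ := exists_trF_one hr hq hF
  have hx1ne : x1 ≠ 0 := by rintro rfl; rw [trF_zero] at hx1; exact zero_ne_one hx1
  set w0 : F := c⁻¹ * x1 with hw0
  have hw0ne : w0 ≠ 0 := mul_ne_zero (inv_ne_zero hc) hx1ne
  have hcw0 : trF F r (c * w0) = 1 := by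
    rw [hw0, ← mul_assoc, mul_inv_cancel₀ hc, one_mul]; exact hx1
  have hU : ∀ u : F, u ≠ 0 → u ≠ w0 → trF F r (c * (u ^ 2 / w0 + u)) = 1 := by
    intro u hu huw
    have huw0 : u + w0 ≠ 0 := fun h0 => huw (by linear_combination h0 - w0 * h2)
    have hxne : u⁻¹ ≠ (u + w0)⁻¹ := by
      intro h0
      have h1 : u = u + w0 := inv_injective h0
      exact hw0ne (by linear_combination -h1)
    have h0 := step1 u⁻¹ (u + w0)⁻¹ (inv_ne_zero hu) (inv_ne_zero huw0) hxne
    rw [inv_inv, inv_inv] at h0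
    have hinv : (u⁻¹ + (u + w0)⁻¹)⁻¹ = u * (u + w0) / w0 := by
      have hne : u⁻¹ + (u + w0)⁻¹ = w0 / (u * (u + w0)) := by
        field_simp
        linear_combination u * h2
      rw [hne, inv_div]
    rw [hinv] at h0
    have harg : c * u + c * (u + w0) + c * (u * (u + w0) / w0)
        = c * w0 + c * (u ^ 2 / w0 + u) := by
      field_simp
      linear_combination (u * w0) * h2
    rw [harg, trF_add h2, hcw0] at h0
    rcases trF_zero_or_one h2 hq hF (c * (u ^ 2 / w0 + u)) with hz | hz
    · exfalso; rw [hz, add_zero] at h0; exact one_ne_zero h0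
    · exact hz
  obtain ⟨u1, hu1⟩ : ∃ x : F, x ∉ ({0, w0} : Finset F) := by
    apply exists_notMem
    have h1 : ({0, w0} : Finset F).card ≤ 2 := by
      apply le_trans (Finset.card_insert_le _ _); simp
    omega
  simp only [Finset.mem_insert, Finset.mem_singleton, not_or] at hu1
  obtain ⟨hu10, hu1w⟩ := hu1
  obtain ⟨u2, hu2⟩ : ∃ x : F, x ∉ ({0, w0, u1, u1 + w0} : Finset F) := by
    apply exists_notMem
    have h1 : ({0, w0, u1, u1 + w0} : Finset F).card ≤ 4 := by
      apply le_trans (Finset.card_insert_le _ _)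
      have h2' : ({w0, u1, u1 + w0} : Finset F).card ≤ 3 := by
        apply le_trans (Finset.card_insert_le _ _)
        have : ({u1, u1 + w0} : Finset F).card ≤ 2 := by
          apply le_trans (Finset.card_insert_le _ _); simp
        omega
      omega
    omega
  simp only [Finset.mem_insert, Finset.mem_singleton, not_or] at hu2
  obtain ⟨hu20, hu2w, hu21, hu21w⟩ := hu2
  have hsum0 : u1 + u2 ≠ 0 := by
    intro h0
    apply hu21
    linear_combination h0 - u1 * h2
  have hsumw : u1 + u2 ≠ w0 := by
    intro h0
    apply hu21w
    linear_combination h0 - u1 * h2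
  have e1 := hU u1 hu10 hu1w
  have e2 := hU u2 hu20 hu2w
  have e3 := hU (u1 + u2) hsum0 hsumw
  have harg2 : c * ((u1 + u2) ^ 2 / w0 + (u1 + u2))
      = c * (u1 ^ 2 / w0 + u1) + c * (u2 ^ 2 / w0 + u2) := by
    field_simp
    linear_combination (u1 * u2) * h2
  rw [harg2, trF_add h2, e1, e2] at e3
  have hfin : (1 : F) = 0 := by linear_combination e3
  exact one_ne_zero hfin

lemma inj_of [Fintype F] {r q : ℕ} (hr : 0 < r) (hq : q = 2 ^ r)
    (hF : Fintype.card F = q) (h2 : (2 : F) = 0) {n : ℕ} {S : Set (Mat F n)}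
    (h : ∀ c : F, c ≠ 0 → ∃ w ∈ S, trF F r (c * Matrix.trace w) = 1) :
    Function.Injective
      (fun a : F => fun w : S => trZ F r (a * Matrix.trace (w : Mat F n))) := by
  intro a b hab
  by_contra hne
  obtain ⟨w, hw, h1⟩ := h (a - b) (sub_ne_zero.mpr hne)
  have heq : trZ F r (a * Matrix.trace w) = trZ F r (b * Matrix.trace w) :=
    congrFun hab ⟨w, hw⟩
  unfold trZ at heq
  have hsplit : trF F r (a * Matrix.trace w) = trF F r (b * Matrix.trace w) + 1 := by
    rw [← h1]
    rw [show a * Matrix.trace w = b * Matrix.trace w + (a - b) * Matrix.trace w by ring]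
    exact trF_add h2 r _ _
  rcases trF_zero_or_one h2 hq hF (b * Matrix.trace w) with h0 | h0
  · rw [hsplit, h0, zero_add, if_neg one_ne_zero, if_pos rfl] at heq
    exact one_ne_zero heq
  · have hz : trF F r (a * Matrix.trace w) = 0 := by
      rw [hsplit, h0]; linear_combination h2
    rw [hz, h0, if_pos rfl, if_neg one_ne_zero] at heq
    exact one_ne_zero heq.symm

end DualAux

/-- Theorem 12: the `F_2`-linear map `a ↦ (w ↦ tr(a·Tr w))` from
`F_q` onto the dual code `C(DC^∓(n,q))^⊥` is injective in the stated ranges. -/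
theorem dual_code_injective
    (F : Type*) [Field F] [Fintype F] (r q : ℕ) (hr : 0 < r) (hq : q = 2 ^ r)
    (hF : Fintype.card F = q) (n : ℕ) :
    ((Odd n ∧ 3 ≤ n) ∨ (n = 1 ∧ 8 ≤ q) →
      Function.Injective
        (fun a : F => fun w : DCneg F n => trZ F r (a * Matrix.trace (w : Mat F n)))) ∧
    ((Even n ∧ 4 ≤ n) ∨ (n = 2 ∧ 4 ≤ q) →
      Function.Injective
        (fun a : F => fun w : DCpos F n => trZ F r (a * Matrix.trace (w : Mat F n)))) := by
  have h2 : (2 : F) = 0 := DualAux.two_zero hr hq hF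
  constructor
  · rintro (⟨hodd, h3⟩ | ⟨rfl, h8⟩)
    · apply DualAux.inj_of hr hq hF h2
      intro c hc
      obtain ⟨x1, hx1⟩ := DualAux.exists_trF_one hr hq hF
      obtain ⟨w, hw, htr⟩ :=
        DualAux.trace_surj h2 (n := n) (k := n - 1) (by omega) (by omega) (c⁻¹ * x1)
      exact ⟨w, hw, by rw [htr, ← mul_assoc, mul_inv_cancel₀ hc, one_mul]; exact hx1⟩
    · apply DualAux.inj_of hr hq hF h2
      intro c hc
      obtain ⟨a, ha, htr⟩ := DualAux.key_one hr hq hF h8 c hc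
      obtain ⟨w, hw, htrw⟩ := DualAux.exists_w_one a ha
      exact ⟨w, hw, by rw [htrw]; exact htr⟩
  · rintro (⟨heven, h4⟩ | ⟨rfl, h4⟩)
    · apply DualAux.inj_of hr hq hF h2
      intro c hc
      obtain ⟨x1, hx1⟩ := DualAux.exists_trF_one hr hq hF
      obtain ⟨w, hw, htr⟩ :=
        DualAux.trace_surj h2 (n := n) (k := n - 2) (by omega) (by omega) (c⁻¹ * x1)
      exact ⟨w, hw, by rw [htr, ← mul_assoc, mul_inv_cancel₀ hc, one_mul]; exact hx1⟩
    · apply DualAux.inj_of hr hq hF h2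
      intro c hc
      obtain ⟨x1, hx1⟩ := DualAux.exists_trF_one hr hq hF
      obtain ⟨w, hw, htr⟩ := DualAux.exists_w_two h2 (by omega) (c⁻¹ * x1)
      exact ⟨w, hw, by rw [htr, ← mul_assoc, mul_inv_cancel₀ hc, one_mul]; exact hx1⟩
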